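/- In a one-step sequence s over {1,…,m} that is K-crossing, if z₁, z₂, …, z_t are consecutive z-motions of s, then for all i ≤ t − K, the z-motions z_i and z_{i+K} are positionally disjoint. -/

import Mathlib

/-- `a` (1-based, of length `n`) is a one-step sequence over `{1,…,m}`. -/
def OneStep (a : ℕ → ℕ) (n m : ℕ) : Prop :=
  1 ≤ n ∧ a 1 = 1 ∧ a n = m ∧
  (∀ i, 1 ≤ i → i ≤ n → 1 ≤ a i ∧ a i ≤ m) ∧
  (∀ i, 1 ≤ i → i < n → a (i + 1) = a i + 1 ∨ a i = a (i + 1) + 1)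

/-- `a` is `K`-crossing: each value is taken at most `K` times. -/
def KCrossing (a : ℕ → ℕ) (n K : ℕ) : Prop :=
  ∀ x, ((Finset.Icc 1 n).filter fun i => a i = x).card ≤ K

/-- `r` is a reversal of the sequence. -/
def IsReversal (a : ℕ → ℕ) (n r : ℕ) : Prop :=
  1 < r ∧ r < n ∧ a (r + 1) = a (r - 1)

/-- `r < r'` are two consecutive reversals. -/
def ConsecRev (a : ℕ → ℕ) (n r r' : ℕ) : Prop :=
  IsReversal a n r ∧ IsReversal a n r' ∧ r < r' ∧
  ∀ s, r < s → s < r' → ¬ IsReversal a n s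

/-- The subsequence `a_e, …, a_f` is a z-motion with (consecutive) reversals `r < r'`:
`e` lies between the previous reversal and `r`, `f` between `r'` and the next reversal,
`a e = a r'` and `a f = a r`. -/
def ZInstance (a : ℕ → ℕ) (n e r r' f : ℕ) : Prop :=
  ConsecRev a n r r' ∧ 1 ≤ e ∧ e < r ∧ r' < f ∧ f ≤ n ∧
  a e = a r' ∧ a f = a r ∧
  (∀ s, e < s → s < r → ¬ IsReversal a n s) ∧
  (∀ s, r' < s → s < f → ¬ IsReversal a n s)

/-- The pair of consecutive reversals `(r, r')` determines a z-motion. -/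
def IsZMotion (a : ℕ → ℕ) (n r r' : ℕ) : Prop := ∃ e f, ZInstance a n e r r' f

/-- Two z-motions, given by their pairs of reversals, are positionally disjoint. -/
def PosDisjoint (a : ℕ → ℕ) (z z' : ℕ × ℕ) : Prop :=
  max (a z.1) (a z.2) < min (a z'.1) (a z'.2) ∨
  max (a z'.1) (a z'.2) < min (a z.1) (a z.2)

/-- In a `K`-crossing one-step sequence, given consecutive z-motions `z₁, …, z_t`
(each `z_{k+1}` starting at the reversal immediately following the second reversal of
`z_k`), for all `i ≤ t − K` the z-motions `z_i` and `z_{i+K}` are positionally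
disjoint. -/
lemma seg_dir (a : ℕ → ℕ) (n m q q' : ℕ) (hs : OneStep a n m) (hcr : ConsecRev a n q q') :
    (∀ s, q ≤ s → s < q' → a (s+1) = a s + 1) ∨ (∀ s, q ≤ s → s < q' → a s = a (s+1) + 1) := by
  obtain ⟨hn, -, -, -, hstep⟩ := hs
  obtain ⟨⟨hq1, hqn, -⟩, ⟨hq'1, hq'n, -⟩, hlt, hno⟩ := hcr
  have key : ∀ s, q ≤ s → s < q' → ((a (s+1) = a s + 1) ↔ (a (q+1) = a q + 1)) := by
    intro s hqs
    induction s, hqs using Nat.le_induction with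
    | base => intro _; rfl
    | succ s hqs IH =>
      intro h
      have hs' : s < q' := by omega
      have IH' := IH hs'
      rcases hstep s (by omega) (by omega) with d1 | d1 <;>
        rcases hstep (s+1) (by omega) (by omega) with d2 | d2
      · exact iff_of_true d2 (IH'.mp d1)
      · exfalso
        have hrev : IsReversal a n (s+1) := ⟨by omega, by omega, by
          show a (s+1+1) = a (s+1-1); simp only [Nat.add_sub_cancel]; omega⟩
        exact hno (s+1) (by omega) h hrev
      · exfalso
        have hrev : IsReversal a n (s+1) := ⟨by omega, by omega, by
          show a (s+1+1) = a (s+1-1); simp only [Nat.add_sub_cancel]; omega⟩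
        exact hno (s+1) (by omega) h hrev
      · refine iff_of_false (by omega) (fun hb => ?_)
        have := IH'.mpr hb; omega
  by_cases h0 : a (q+1) = a q + 1
  · exact Or.inl (fun s h1 h2 => (key s h1 h2).mpr h0)
  · refine Or.inr (fun s h1 h2 => ?_)
    rcases hstep s (by omega) (by omega) with h | h
    · exact absurd ((key s h1 h2).mp h) h0
    · exact h

lemma seg_main (a : ℕ → ℕ) (n m q q' : ℕ) (hs : OneStep a n m) (hcr : ConsecRev a n q q') :
    a q ≠ a q' ∧
    (∀ s, q ≤ s → s ≤ q' → min (a q) (a q') ≤ a s ∧ a s ≤ max (a q) (a q')) ∧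
    (∀ x, min (a q) (a q') ≤ x → x ≤ max (a q) (a q') → ∃ s, q ≤ s ∧ s ≤ q' ∧ a s = x) := by
  have hlt : q < q' := hcr.2.2.1
  rcases seg_dir a n m q q' hs hcr with hup | hdn
  · have F : ∀ s, q ≤ s → s ≤ q' → a s = a q + (s - q) := by
      intro s h1 h2
      induction s, h1 using Nat.le_induction with
      | base => omega
      | succ s hqs IH =>
        have := hup s hqs (by omega)
        have := IH (by omega)
        omega
    have Fq' := F q' (le_of_lt hlt) le_rfl
    refine ⟨by omega, fun s h1 h2 => by have := F s h1 h2; omega, fun x hx1 hx2 => ?_⟩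
    refine ⟨q + (x - a q), by omega, by omega, ?_⟩
    have := F (q + (x - a q)) (by omega) (by omega)
    omega
  · have F : ∀ s, q ≤ s → s ≤ q' → a q = a s + (s - q) := by
      intro s h1 h2
      induction s, h1 using Nat.le_induction with
      | base => omega
      | succ s hqs IH =>
        have := hdn s hqs (by omega)
        have := IH (by omega)
        omega
    have Fq' := F q' (le_of_lt hlt) le_rfl
    refine ⟨by omega, fun s h1 h2 => by have := F s h1 h2; omega, fun x hx1 hx2 => ?_⟩
    refine ⟨q + (a q - x), by omega, by omega, ?_⟩
    have := F (q + (a q - x)) (by omega) (by omega)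
    omega

lemma chainA (u w : ℕ → ℕ) (i N : ℕ) (hiN : i ≤ N)
    (h3 : ∀ k, i ≤ k → k ≤ N → u k ≠ w k)
    (h12 : ∀ k, i ≤ k → k < N →
      min (w k) (u (k+1)) ≤ u k ∧ u k ≤ max (w k) (u (k+1)) ∧
      min (w k) (u (k+1)) ≤ w (k+1) ∧ w (k+1) ≤ max (w k) (u (k+1)))
    (hbase : w i < u i)
    (hov : min (u N) (w N) ≤ max (u i) (w i)) :
    ∀ k, i ≤ k → k ≤ N → min (u k) (w k) ≤ u i ∧ u i ≤ max (u k) (w k) := by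
  have S : ∀ k, i ≤ k → k ≤ N → w k < u k := by
    intro k hk
    induction k, hk using Nat.le_induction with
    | base => exact fun _ => hbase
    | succ k hik IH =>
      intro h
      have hS := IH (by omega)
      have h12k := h12 k hik (by omega)
      have h3k := h3 (k+1) (by omega) h
      omega
  have M : ∀ j, i ≤ j → ∀ k, j ≤ k → k ≤ N → w j ≤ w k ∧ u j ≤ u k := by
    intro j hj k hk
    induction k, hk using Nat.le_induction with
    | base => exact fun _ => ⟨le_rfl, le_rfl⟩
    | succ k hjk IH =>
      intro h
      have h12k := h12 k (by omega) (by omega)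
      have hSk := S k (by omega) (by omega)
      have := IH (by omega)
      omega
  intro k hk hkN
  have h1 := S i le_rfl hiN
  have h2 := S N hiN le_rfl
  have h4 := S k hk hkN
  have m1 := M k hk N hkN le_rfl
  have m2 := M i le_rfl k hk hkN
  omega

theorem stmt6 (a : ℕ → ℕ) (n m K t : ℕ)
    (hs : OneStep a n m) (hK : KCrossing a n K)
    (p : ℕ → ℕ × ℕ)
    (hz : ∀ k, 1 ≤ k → k ≤ t → IsZMotion a n (p k).1 (p k).2)
    (hcons : ∀ k, 1 ≤ k → k < t → ConsecRev a n (p k).2 (p (k + 1)).1) :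
    ∀ i, 1 ≤ i → i + K ≤ t → PosDisjoint a (p i) (p (i + K)) := by
  intro i hi hiK
  by_contra hnd
  unfold PosDisjoint at hnd
  push_neg at hnd
  obtain ⟨hnd1, hnd2⟩ := hnd
  have hcr1 : ∀ k, i ≤ k → k ≤ i+K → ConsecRev a n (p k).1 (p k).2 := by
    intro k h1 h2
    obtain ⟨e, f, hzi⟩ := hz k (by omega) (by omega)
    exact hzi.1
  have fact3 : ∀ k, i ≤ k → k ≤ i+K → a (p k).1 ≠ a (p k).2 :=
    fun k h1 h2 => (seg_main a n m _ _ hs (hcr1 k h1 h2)).1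
  have factAB : ∀ k, i ≤ k → k < i+K →
      min (a (p k).2) (a (p (k+1)).1) ≤ a (p k).1 ∧
      a (p k).1 ≤ max (a (p k).2) (a (p (k+1)).1) ∧
      min (a (p k).2) (a (p (k+1)).1) ≤ a (p (k+1)).2 ∧
      a (p (k+1)).2 ≤ max (a (p k).2) (a (p (k+1)).1) := by
    intro k h1 h2
    have hck := hcons k (by omega) (by omega)
    obtain ⟨hrev1, hrev2, hlt', hno'⟩ := hck
    obtain ⟨e, f, hz1⟩ := hz k (by omega) (by omega)
    obtain ⟨hcrk, he1, he2, hf1, hf2, hae, haf, hnoe, hnof⟩ := hz1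
    obtain ⟨E, F, hz2⟩ := hz (k+1) (by omega) (by omega)
    obtain ⟨hcrk2, hE1, hE2, hF1, hF2, haE, haF, hnoE, hnoF⟩ := hz2
    have hfR : f ≤ (p (k+1)).1 := by
      by_contra hcon
      exact hnof (p (k+1)).1 hlt' (by omega) hrev2
    have hEr' : (p k).2 ≤ E := by
      by_contra hcon
      exact hnoE (p k).2 (by omega) hlt' hrev1
    have range := (seg_main a n m _ _ hs ⟨hrev1, hrev2, hlt', hno'⟩).2.1
    have R1 := range f (by omega) hfR
    have R2 := range E hEr' (by omega)
    rw [haf] at R1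
    rw [haE] at R2
    exact ⟨R1.1, R1.2, R2.1, R2.2⟩
  have hbnd : ∀ k, i ≤ k → k ≤ i+K → a (p k).1 ≤ m ∧ a (p k).2 ≤ m := by
    intro k h1 h2
    obtain ⟨⟨ha1, ha2, -⟩, ⟨ha3, ha4, -⟩, hlt', hno'⟩ := hcr1 k h1 h2
    obtain ⟨-, -, -, hb, -⟩ := hs
    exact ⟨(hb (p k).1 (by omega) (by omega)).2, (hb (p k).2 (by omega) (by omega)).2⟩
  -- the betweenness conclusion, in both orientation cases
  have betw : ∀ k, i ≤ k → k ≤ i+K →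
      min (a (p k).1) (a (p k).2) ≤ a (p i).1 ∧ a (p i).1 ≤ max (a (p k).1) (a (p k).2) := by
    rcases (Nat.lt_or_ge (a (p i).2) (a (p i).1)) with hbi | hbi
    · exact chainA (fun k => a (p k).1) (fun k => a (p k).2) i (i+K) (by omega)
        fact3 (fun k h1 h2 => factAB k h1 h2) hbi hnd1
    · have hbi' : a (p i).1 < a (p i).2 := lt_of_le_of_ne hbi (fun h => fact3 i le_rfl (by omega) h)
      have C := chainA (fun k => m - a (p k).1) (fun k => m - a (p k).2) i (i+K) (by omega)
        (by
          intro k h1 h2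
          have := fact3 k h1 h2
          have := hbnd k h1 h2
          omega)
        (by
          intro k h1 h2
          have F := factAB k h1 h2
          have b1 := hbnd k h1 (by omega)
          have b2 := hbnd (k+1) (by omega) (by omega)
          omega)
        (by have := hbnd i le_rfl (by omega); omega)
        (by
          have b1 := hbnd i le_rfl (by omega)
          have b2 := hbnd (i+K) (by omega) le_rfl
          omega)
      intro k h1 h2
      have := C k h1 h2
      have b1 := hbnd k h1 h2
      have b2 := hbnd i le_rfl (by omega)
      omega
  have cross : ∀ k, i ≤ k → k ≤ i+K →
      ∃ s, (p k).1 ≤ s ∧ s ≤ (p k).2 ∧ a s = a (p i).1 := by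
    intro k h1 h2
    exact (seg_main a n m _ _ hs (hcr1 k h1 h2)).2.2 _ (betw k h1 h2).1 (betw k h1 h2).2
  have posmono : ∀ j, i ≤ j → ∀ k, j < k → k ≤ i+K → (p j).2 < (p k).1 := by
    intro j hj k hk
    induction k, hk using Nat.le_induction with
    | base => exact fun h => (hcons j (by omega) (by omega)).2.2.1
    | succ k hjk IH =>
      intro h
      have h1 := IH (by omega)
      have h2 := (hcr1 k (by omega) (by omega)).2.2.1
      have h3 := (hcons k (by omega) (by omega)).2.2.1
      omega
  have hex : ∀ k, ∃ s, (i ≤ k ∧ k ≤ i+K) →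
      ((p k).1 ≤ s ∧ s ≤ (p k).2 ∧ a s = a (p i).1) := by
    intro k
    by_cases h : i ≤ k ∧ k ≤ i+K
    · obtain ⟨s, hs1, hs2, hs3⟩ := cross k h.1 h.2
      exact ⟨s, fun _ => ⟨hs1, hs2, hs3⟩⟩
    · exact ⟨0, fun hc => absurd hc h⟩
  choose g hg using hex
  have hsub : ∀ k ∈ Finset.Icc i (i+K),
      g k ∈ (Finset.Icc 1 n).filter (fun s => a s = a (p i).1) := by
    intro k hk
    rw [Finset.mem_Icc] at hk
    obtain ⟨hg1, hg2, hg3⟩ := hg k hk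
    obtain ⟨⟨hr1, hr2, -⟩, ⟨hr3, hr4, -⟩, -, -⟩ := hcr1 k hk.1 hk.2
    rw [Finset.mem_filter, Finset.mem_Icc]
    exact ⟨⟨by omega, by omega⟩, hg3⟩
  have hinj : Set.InjOn g (Finset.Icc i (i+K)) := by
    have key : ∀ j k, i ≤ j → j < k → k ≤ i+K → g j < g k := by
      intro j k h1 h2 h3
      obtain ⟨hj1, hj2, -⟩ := hg j ⟨h1, by omega⟩
      obtain ⟨hk1, hk2, -⟩ := hg k ⟨by omega, h3⟩
      have := posmono j h1 k h2 h3
      omega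
    intro j hj k hk heq
    simp only [Finset.coe_Icc, Set.mem_Icc] at hj hk
    rcases lt_trichotomy j k with h | h | h
    · have := key j k hj.1 h hk.2; omega
    · exact h
    · have := key k j hk.1 h hj.2; omega
  have hcard := Finset.card_le_card_of_injOn g hsub hinj
  rw [Nat.card_Icc] at hcard
  have := hK (a (p i).1)
  omega
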